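/- arXiv:2409.11779 — 5 statements merged into one kernel-verified Lean document; each statement's English description precedes it below -/
import Mathlib

section
/- Let Q be a finite set of distinct points in R^d. The number of points in Q whose nearest neighbor in Q is a fixed point q_1 is at most 3^d. -/
open Metric MeasureTheory Finset Module
open scoped ENNReal

local notation "⟪" x ", " y "⟫" => @inner ℝ _ _ x y

/-- Packing lemma: a finset of unit vectors in `ℝ^d` that are pairwise at distance
at least 1 has cardinality at most `3^d`. -/
lemma packing_lemma (d : ℕ) (T : Finset (EuclideanSpace ℝ (Fin d)))
    (hnorm : ∀ x ∈ T, ‖x‖ = 1)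
    (hsep : ∀ x ∈ T, ∀ y ∈ T, x ≠ y → 1 ≤ dist x y) :
    T.card ≤ 3 ^ d := by
  let E := EuclideanSpace ℝ (Fin d)
  set B : ℝ≥0∞ := volume (ball (0 : E) 1) with hB
  have hBpos : 0 < B := measure_ball_pos _ _ one_pos
  have hBlt : B < ⊤ := measure_ball_lt_top
  have hdisj : (T : Set E).PairwiseDisjoint (fun x => ball x (1/2 : ℝ)) := by
    intro x hx y hy hxy
    refine Set.disjoint_left.2 fun z hzx hzy => ?_
    have := hsep x hx y hy hxy
    have : dist x y < 1 := by
      calc dist x y ≤ dist x z + dist z y := dist_triangle _ _ _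
        _ < 1/2 + 1/2 := by
            rw [dist_comm x z]
            exact add_lt_add hzx hzy
        _ = 1 := by norm_num
    linarith [hsep x hx y hy hxy]
  have hsub : (⋃ x ∈ T, ball x (1/2 : ℝ)) ⊆ ball (0 : E) (3/2) := by
    intro z hz
    simp only [Set.mem_iUnion] at hz
    obtain ⟨x, hx, hzx⟩ := hz
    have : dist z (0 : E) < 3/2 := by
      calc dist z 0 ≤ dist z x + dist x 0 := dist_triangle _ _ _
        _ < 1/2 + 1 := by
            refine add_lt_add_of_lt_of_le hzx ?_
            rw [dist_zero_right, hnorm x hx]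
        _ = 3/2 := by norm_num
    exact mem_ball.2 this
  have hdim : finrank ℝ E = d := finrank_euclideanSpace_fin
  have hball : ∀ x : E, volume (ball x (1/2 : ℝ))
      = ENNReal.ofReal ((1/2 : ℝ) ^ d) * B := by
    intro x
    rw [Measure.addHaar_ball_of_pos volume x (by norm_num : (0:ℝ) < 1/2), hdim]
  have hbig : volume (ball (0 : E) (3/2 : ℝ)) = ENNReal.ofReal ((3/2 : ℝ) ^ d) * B := by
    rw [Measure.addHaar_ball_of_pos volume _ (by norm_num : (0:ℝ) < 3/2), hdim]
  have hsum : (T.card : ℝ≥0∞) * (ENNReal.ofReal ((1/2 : ℝ) ^ d) * B)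
      ≤ ENNReal.ofReal ((3/2 : ℝ) ^ d) * B := by
    calc (T.card : ℝ≥0∞) * (ENNReal.ofReal ((1/2 : ℝ) ^ d) * B)
        = ∑ x ∈ T, volume (ball x (1/2 : ℝ)) := by
          rw [Finset.sum_congr rfl fun x _ => hball x, Finset.sum_const, nsmul_eq_mul]
      _ = volume (⋃ x ∈ T, ball x (1/2 : ℝ)) :=
          (measure_biUnion_finset hdisj fun x _ => measurableSet_ball).symm
      _ ≤ volume (ball (0 : E) (3/2 : ℝ)) := measure_mono hsub
      _ = _ := hbig
  have hfactor : ENNReal.ofReal ((3/2 : ℝ) ^ d) = (3 ^ d : ℕ) * ENNReal.ofReal ((1/2 : ℝ) ^ d) := by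
    rw [← ENNReal.ofReal_natCast, ← ENNReal.ofReal_mul (by positivity)]
    congr 1
    push_cast
    rw [← mul_pow]
    norm_num
  rw [hfactor, mul_assoc] at hsum
  have hne : ENNReal.ofReal ((1/2 : ℝ) ^ d) * B ≠ 0 := by
    have h1 : (0:ℝ) < (1/2 : ℝ)^d := by positivity
    exact mul_ne_zero (by simpa [ENNReal.ofReal_eq_zero, not_le] using h1) hBpos.ne'
  have hnt : ENNReal.ofReal ((1/2 : ℝ) ^ d) * B ≠ ⊤ :=
    ENNReal.mul_ne_top ENNReal.ofReal_ne_top hBlt.ne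
  have := (ENNReal.mul_le_mul_iff_left hne hnt).1 hsum
  exact_mod_cast this

/-- In a finite set of distinct points in `ℝ^d`, the number of points
whose nearest neighbor is a fixed point `q i₀` is at most `3^d`. -/
theorem stmt5 (d n : ℕ) (q : Fin n → EuclideanSpace ℝ (Fin d))
    (hq : Function.Injective q) (i₀ : Fin n) :
    ((Finset.univ.filter (fun i : Fin n => i ≠ i₀ ∧
        ∀ j, j ≠ i → j ≠ i₀ → dist (q i) (q i₀) ≤ dist (q i) (q j))).card : ℕ)
      ≤ 3 ^ d := by
  classical
  set S := Finset.univ.filter (fun i : Fin n => i ≠ i₀ ∧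
      ∀ j, j ≠ i → j ≠ i₀ → dist (q i) (q i₀) ≤ dist (q i) (q j)) with hS
  -- for i ∈ S, q i ≠ q i₀
  have hne : ∀ i ∈ S, q i - q i₀ ≠ 0 := by
    intro i hi
    rw [hS, Finset.mem_filter] at hi
    exact sub_ne_zero.2 fun h => hi.2.1 (hq h)
  -- normalized vectors
  set v : Fin n → EuclideanSpace ℝ (Fin d) :=
    fun i => ‖q i - q i₀‖⁻¹ • (q i - q i₀) with hv
  have hvnorm : ∀ i ∈ S, ‖v i‖ = 1 := by
    intro i hi
    rw [hv]
    simp only [norm_smul, norm_inv, norm_norm]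
    rw [inv_mul_cancel₀ (norm_ne_zero_iff.2 (hne i hi))]
  -- key inner product bound
  have hinner : ∀ i ∈ S, ∀ j ∈ S, i ≠ j →
      ⟪v i, v j⟫ ≤ 1/2 := by
    intro i hi j hj hij
    have hi' := (Finset.mem_filter.1 hi).2
    have hj' := (Finset.mem_filter.1 hj).2
    have h1 : dist (q i) (q i₀) ≤ dist (q i) (q j) := hi'.2 j (fun h => hij h.symm) hj'.1
    have h2 : dist (q j) (q i₀) ≤ dist (q j) (q i) := hj'.2 i hij hi'.1
    set u := q i - q i₀ with hu
    set w := q j - q i₀ with hw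
    have ha : (0:ℝ) < ‖u‖ := norm_pos_iff.2 (hne i hi)
    have hb : (0:ℝ) < ‖w‖ := norm_pos_iff.2 (hne j hj)
    have huw : q i - q j = u - w := by rw [hu, hw]; abel
    have h1' : ‖u‖ ≤ ‖u - w‖ := by
      rw [← huw]; simpa [dist_eq_norm] using h1
    have h2' : ‖w‖ ≤ ‖u - w‖ := by
      have : q j - q i = w - u := by rw [hu, hw]; abel
      rw [← neg_sub, norm_neg, ← this]
      simpa [dist_eq_norm] using h2
    have hexp : ‖u - w‖^2 = ‖u‖^2 - 2 * ⟪u, w⟫ + ‖w‖^2 := norm_sub_sq_real u w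
    have hta : ⟪u, w⟫ ≤ ‖w‖^2 / 2 := by
      nlinarith [sq_nonneg (‖u - w‖ - ‖u‖), norm_nonneg (u - w)]
    have htb : ⟪u, w⟫ ≤ ‖u‖^2 / 2 := by
      nlinarith [sq_nonneg (‖u - w‖ - ‖w‖), norm_nonneg (u - w)]
    have hab : ⟪u, w⟫ ≤ ‖u‖ * ‖w‖ / 2 := by
      rcases le_total ‖u‖ ‖w‖ with h | h
      · nlinarith
      · nlinarith
    have hvij : ⟪v i, v j⟫ = ‖u‖⁻¹ * ‖w‖⁻¹ * ⟪u, w⟫ := by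
      rw [hv]
      simp only [real_inner_smul_left, real_inner_smul_right, ← hu, ← hw]
      ring
    rw [hvij]
    calc ‖u‖⁻¹ * ‖w‖⁻¹ * ⟪u, w⟫ ≤ ‖u‖⁻¹ * ‖w‖⁻¹ * (‖u‖ * ‖w‖ / 2) :=
          mul_le_mul_of_nonneg_left hab (by positivity)
      _ = 1/2 := by field_simp
  -- separation of normalized vectors
  have hsep : ∀ i ∈ S, ∀ j ∈ S, i ≠ j → 1 ≤ dist (v i) (v j) := by
    intro i hi j hj hij
    have h : ‖v i - v j‖^2 = ‖v i‖^2 - 2 * ⟪v i, v j⟫ + ‖v j‖^2 := norm_sub_sq_real _ _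
    rw [hvnorm i hi, hvnorm j hj] at h
    have hI := hinner i hi j hj hij
    have hsq : (1:ℝ) ≤ ‖v i - v j‖^2 := by nlinarith
    rw [dist_eq_norm]
    nlinarith [norm_nonneg (v i - v j)]
  -- image under v
  have hvinj : Set.InjOn v S := by
    intro i hi j hj h
    by_contra hij
    have := hsep i hi j hj hij
    rw [h, dist_self] at this
    linarith
  have hcard : S.card = (S.image v).card := (Finset.card_image_of_injOn hvinj).symm
  rw [hcard]
  apply packing_lemma
  · intro x hx
    obtain ⟨i, hi, rfl⟩ := Finset.mem_image.1 hx
    exact hvnorm i hi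
  · intro x hx y hy hxy
    obtain ⟨i, hi, rfl⟩ := Finset.mem_image.1 hx
    obtain ⟨j, hj, rfl⟩ := Finset.mem_image.1 hy
    exact hsep i hi j hj (fun h => hxy (by rw [h]))
end

section
/- Let q_1, q_x, q_y be distinct points in R^d such that q_1 is the nearest neighbor of both q_x and q_y among the whole point set (in particular ‖q_x − q_y‖ ≥ ‖q_x − q_1‖ and ‖q_x − q_y‖ ≥ ‖q_y − q_1‖). Let r > 0 with r ≤ ‖q_x − q_1‖ and r ≤ ‖q_y − q_1‖, and let q_x', q_y' be the points on the segments from q_1 to q_x and q_1 to q_y respectively at distance r from q_1. Then ‖q_x' − q_y'‖ ≥ r. -/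
set_option maxHeartbeats 1000000


/-- If `q₁` is the nearest neighbor of both `qx` and `qy`, then the
radial projections of `qx` and `qy` onto the sphere of radius `r` around `q₁`
are at distance at least `r` from each other. -/
theorem stmt6 (d : ℕ) (q₁ qx qy : EuclideanSpace ℝ (Fin d)) (r : ℝ)
    (hx1 : qx ≠ q₁) (hy1 : qy ≠ q₁) (hxy : qx ≠ qy)
    (h1 : ‖qx - qy‖ ≥ ‖qx - q₁‖) (h2 : ‖qx - qy‖ ≥ ‖qy - q₁‖)
    (hr : 0 < r) (hrx : r ≤ ‖qx - q₁‖) (hry : r ≤ ‖qy - q₁‖) :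
    ‖(q₁ + (r / ‖qx - q₁‖) • (qx - q₁)) - (q₁ + (r / ‖qy - q₁‖) • (qy - q₁))‖
      ≥ r := by
  set u := qx - q₁ with hu
  set v := qy - q₁ with hv
  have ha : (0:ℝ) < ‖u‖ := norm_pos_iff.mpr (sub_ne_zero.mpr hx1)
  have hb : (0:ℝ) < ‖v‖ := norm_pos_iff.mpr (sub_ne_zero.mpr hy1)
  have huv : u - v = qx - qy := by rw [hu, hv]; abel
  have hexp : ‖u - v‖^2 = ‖u‖^2 - 2 * inner ℝ u v + ‖v‖^2 := by
    rw [@norm_sub_sq_real]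
  have h1' : ‖u‖^2 ≤ ‖u - v‖^2 := by
    rw [huv]; exact pow_le_pow_left₀ (norm_nonneg _) h1 2
  have h2' : ‖v‖^2 ≤ ‖u - v‖^2 := by
    rw [huv]; exact pow_le_pow_left₀ (norm_nonneg _) h2 2
  have hi1 : (2:ℝ) * inner ℝ u v ≤ ‖v‖^2 := by nlinarith
  have hi2 : (2:ℝ) * inner ℝ u v ≤ ‖u‖^2 := by nlinarith
  have hiab : (2:ℝ) * inner ℝ u v ≤ ‖u‖ * ‖v‖ := by
    rcases le_or_gt ((inner ℝ u v : ℝ)) 0 with h | h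
    · nlinarith
    · nlinarith [mul_le_mul hi2 hi1 (by positivity) (sq_nonneg ‖u‖)]
  have hgoal : (q₁ + (r / ‖u‖) • u) - (q₁ + (r / ‖v‖) • v)
      = (r / ‖u‖) • u - (r / ‖v‖) • v := by abel
  rw [hgoal]
  have hsq : ‖(r / ‖u‖) • u - (r / ‖v‖) • v‖^2
      = (r/‖u‖)^2 * ‖u‖^2 - 2 * ((r/‖u‖) * (r/‖v‖)) * inner ℝ u v
        + (r/‖v‖)^2 * ‖v‖^2 := by
    rw [@norm_sub_sq_real, norm_smul, norm_smul, real_inner_smul_left,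
      real_inner_smul_right, mul_pow, mul_pow]
    simp only [Real.norm_eq_abs, abs_of_pos (div_pos hr ha),
      abs_of_pos (div_pos hr hb)]
    ring
  have key : r^2 ≤ ‖(r / ‖u‖) • u - (r / ‖v‖) • v‖^2 := by
    rw [hsq]
    have e1 : (r/‖u‖)^2 * ‖u‖^2 = r^2 := by field_simp
    have e2 : (r/‖v‖)^2 * ‖v‖^2 = r^2 := by field_simp
    rw [e1, e2]
    have : 2 * ((r/‖u‖) * (r/‖v‖)) * inner ℝ u v ≤ r^2 := by
      have hab : 0 < ‖u‖ * ‖v‖ := mul_pos ha hb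
      have : (r/‖u‖) * (r/‖v‖) = r^2 / (‖u‖ * ‖v‖) := by field_simp
      rw [this]
      have h3 : 2 * (r ^ 2 / (‖u‖ * ‖v‖)) * (inner ℝ u v : ℝ)
          = (2 * inner ℝ u v) * r ^ 2 / (‖u‖ * ‖v‖) := by ring
      rw [h3, div_le_iff₀ hab]
      nlinarith [mul_le_mul_of_nonneg_right hiab (sq_nonneg r)]
    linarith
  nlinarith [norm_nonneg ((r / ‖u‖) • u - (r / ‖v‖) • v), key]
end

section
/- Suppose a point in B(q_i, l_i) lies in the ball B(k, h) and some point X_j ∈ B(q_j, l_j) (j ≠ i, where l_i = β N_i, l_j = β N_j are β-fractions of nearest-neighbor distances) satisfies ‖X_j − k‖ ≤ h/β, with 0 < β < 1/3. Then l_i (1 − 2β) ≤ (1 + β) h, and consequently B(q_i, l_i) ⊆ B(k, (3/(1−2β)) h). -/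
open Metric

/-- Expansion factor: if the truth ball `B(qᵢ, lᵢ)` meets the
hypothesis ball `B(k, h)` and some `X_j ∈ B(q_j, l_j)` (`j ≠ i`) lies within
`B(k, h/β)`, with `0 < β < 1/3`, then `lᵢ (1 - 2β) ≤ (1 + β) h` and
`B(qᵢ, lᵢ) ⊆ B(k, (3/(1-2β)) h)`. -/
theorem stmt7 (d : ℕ) (qi qj Xj k : EuclideanSpace ℝ (Fin d))
    (β Ni Nj li lj h : ℝ)
    (hβ0 : 0 < β) (hβ : β < 1 / 3) (hh : 0 < h)
    (hNi0 : 0 < Ni) (hNj0 : 0 < Nj)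
    (hli : li = β * Ni) (hlj : lj = β * Nj)
    (hNi : Ni ≤ dist qi qj) (hNj : Nj ≤ dist qi qj)
    (hmeet : (closedBall qi li ∩ closedBall k h).Nonempty)
    (hXj : dist Xj qj ≤ lj) (hXk : dist Xj k ≤ h / β) :
    li * (1 - 2 * β) ≤ (1 + β) * h ∧
      closedBall qi li ⊆ closedBall k ((3 / (1 - 2 * β)) * h) := by
  obtain ⟨y, hy1, hy2⟩ := hmeet
  rw [mem_closedBall] at hy1 hy2
  have hkqi : dist k qi ≤ h + li := by
    calc dist k qi ≤ dist k y + dist y qi := dist_triangle _ _ _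
    _ ≤ h + li := by rw [dist_comm k y]; linarith
  have ht1 : dist qi qj ≤ dist qi Xj + dist Xj qj := dist_triangle _ _ _
  have ht2 : dist qi Xj ≤ dist Xj k + dist k qi := by
    rw [dist_comm qi Xj]; exact dist_triangle _ _ _
  have hXk' : β * dist Xj k ≤ h := by
    rw [le_div_iff₀ hβ0] at hXk; nlinarith
  have main : li * (1 - 2 * β) ≤ (1 + β) * h := by
    have hb2 : (0:ℝ) ≤ β * β := mul_nonneg hβ0.le hβ0.le
    have hb3 : (0:ℝ) ≤ β * (1 - 2 * β) := by nlinarith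
    nlinarith [mul_le_mul_of_nonneg_left ht1 hβ0.le,
      mul_le_mul_of_nonneg_left ht2 hβ0.le,
      mul_le_mul_of_nonneg_left hXj hβ0.le,
      mul_le_mul_of_nonneg_left hkqi hβ0.le,
      mul_le_mul_of_nonneg_left hNi hb2,
      mul_le_mul_of_nonneg_left hNj hb2,
      mul_le_mul_of_nonneg_left hNi hb3, hXk']
  refine ⟨main, fun x hx => ?_⟩
  rw [mem_closedBall] at hx ⊢
  have h2β : 0 < 1 - 2 * β := by linarith
  have hli' : li ≤ (1 + β) * h / (1 - 2 * β) := by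
    rw [le_div_iff₀ h2β]; linarith
  calc dist x k ≤ dist x qi + dist qi k := dist_triangle _ _ _
  _ ≤ li + (h + li) := by rw [dist_comm qi k]; linarith
  _ ≤ (3 / (1 - 2 * β)) * h := by
      rw [div_mul_eq_mul_div, le_div_iff₀ h2β]
      have : li * (1 - 2 * β) ≤ (1 + β) * h := main
      nlinarith
end

section
/- Let Φ(s, l, h) = log(max(s, l, h)/√(l h)). Suppose s, l change to s', l' with s' ≤ s + (α/β) l, (1 − α) l ≤ l' ≤ (1 + α) l, and h unchanged, where 0 < α < 1 and 0 < β < 1. Then Φ(s', l', h) − Φ(s, l, h) ≤ log((1 + α/β)/√(1 − α)). That is, one evolver step changes the potential of the moved point by at most a constant. -/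
/-- One evolver step changes the potential of the moved point by at
most a constant: if `s' ≤ s + (α/β) l` and `(1-α) l ≤ l' ≤ (1+α) l` with `h`
unchanged, then `Φ(s',l',h) - Φ(s,l,h) ≤ log ((1 + α/β)/√(1-α))`. -/
theorem stmt11 (s l h s' l' α β : ℝ)
    (hs : 0 < s) (hl : 0 < l) (hh : 0 < h) (hs' : 0 < s') (hl' : 0 < l')
    (hα : 0 < α) (hα1 : α < 1) (hβ : 0 < β) (hβ1 : β < 1)
    (hsle : s' ≤ s + (α / β) * l)
    (hllo : (1 - α) * l ≤ l') (hlhi : l' ≤ (1 + α) * l)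
    (Φ : ℝ → ℝ → ℝ → ℝ)
    (hΦ : Φ = fun s l h => Real.log (max s (max l h) / Real.sqrt (l * h))) :
    Φ s' l' h - Φ s l h ≤ Real.log ((1 + α / β) / Real.sqrt (1 - α)) := by
  subst hΦ
  simp only
  set M := max s (max l h) with hM
  set M' := max s' (max l' h) with hM'
  have hMpos : 0 < M := lt_of_lt_of_le hs (le_max_left _ _)
  have hM'pos : 0 < M' := lt_of_lt_of_le hs' (le_max_left _ _)
  have h1α : (0:ℝ) < 1 - α := by linarith
  have hαβpos : 0 < α / β := div_pos hα hβ
  have hαβ : α ≤ α / β := by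
    rw [le_div_iff₀ hβ]; nlinarith
  have hMle : M' ≤ (1 + α / β) * M := by
    have hsM : s ≤ M := le_max_left _ _
    have hlM : l ≤ M := le_trans (le_max_left _ _) (le_max_right _ _)
    have hhM : h ≤ M := le_trans (le_max_right _ _) (le_max_right _ _)
    apply max_le
    · calc s' ≤ s + (α / β) * l := hsle
        _ ≤ M + (α / β) * M := by nlinarith
        _ = (1 + α / β) * M := by ring
    apply max_le
    · calc l' ≤ (1 + α) * l := hlhi
        _ ≤ (1 + α / β) * M := by nlinarith
    · nlinarith
  have hsqrt : Real.sqrt (1 - α) * Real.sqrt (l * h) ≤ Real.sqrt (l' * h) := by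
    rw [← Real.sqrt_mul h1α.le]
    apply Real.sqrt_le_sqrt
    nlinarith
  have hlh : 0 < Real.sqrt (l * h) := Real.sqrt_pos.2 (by positivity)
  have hl'h : 0 < Real.sqrt (l' * h) := Real.sqrt_pos.2 (by positivity)
  have hs1α : 0 < Real.sqrt (1 - α) := Real.sqrt_pos.2 h1α
  have hBpos : 0 < M / Real.sqrt (l * h) := by positivity
  have hCpos : 0 < (1 + α / β) / Real.sqrt (1 - α) := by positivity
  rw [sub_le_iff_le_add, ← Real.log_mul (ne_of_gt hCpos) (ne_of_gt hBpos)]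
  apply Real.log_le_log (by positivity)
  rw [div_mul_div_comm, div_le_div_iff₀ hl'h (by positivity)]
  calc M' * (Real.sqrt (1 - α) * Real.sqrt (l * h))
      ≤ ((1 + α / β) * M) * Real.sqrt (l' * h) :=
        mul_le_mul hMle hsqrt (by positivity) (by positivity)
    _ = (1 + α / β) * M * Real.sqrt (l' * h) := rfl
end

section
/- Let 0 < β < 1/3 and suppose: (i) B(q, l) ∩ B(k, h) ≠ ∅ (s = ‖q − k‖ ≤ h + l); (ii) some point X_j with ‖X_j − q_j‖ ≤ l_j ≤ l satisfies ‖X_j − k‖ > h/β, where q_j is the nearest neighbor of q so ‖X_j − q‖ ≤ l/β + l_j; and (iii) l ≤ 2h. Then Φ(s, l, h) = log(max(s,l,h)/√(lh)) ≤ log(3 √((1+2β)/(1−β))). In particular the potential is bounded by a constant depending only on β. -/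
open Metric

/-- Done tracking: if the truth ball `B(q,l)` meets the hypothesis
ball `B(k,h)`, the nearest neighbor's sample `X_j` lies outside the
`1/β`-expansion of `B(k,h)`, and `l ≤ 2h`, then the potential is bounded by the
constant `log (3 √((1+2β)/(1-β)))`. -/
theorem stmt19 (d : ℕ) (q qj Xj k : EuclideanSpace ℝ (Fin d))
    (β l lj h s : ℝ) (hβ0 : 0 < β) (hβ : β < 1 / 3)
    (hl : 0 < l) (hlj : 0 < lj) (hh : 0 < h)
    (hs : s = ‖q - k‖)
    (hmeet : (closedBall q l ∩ closedBall k h).Nonempty)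
    (hnear : ‖q - qj‖ = l / β)
    (hXj : ‖Xj - qj‖ ≤ lj) (hljl : lj ≤ l)
    (hout : ‖Xj - k‖ > h / β)
    (hl2h : l ≤ 2 * h) :
    Real.log (max s (max l h) / Real.sqrt (l * h)) ≤
      Real.log (3 * Real.sqrt ((1 + 2 * β) / (1 - β))) := by
  have hβ1 : (0:ℝ) < 1 - β := by linarith
  have hβ2 : (0:ℝ) < 1 + 2 * β := by linarith
  -- s ≤ h + l
  obtain ⟨x, hxq, hxk⟩ := hmeet
  rw [mem_closedBall, dist_comm] at hxq hxk
  have hsl : s ≤ l + h := by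
    rw [hs]
    calc ‖q - k‖ ≤ ‖q - x‖ + ‖x - k‖ := by
          simpa using norm_sub_le_norm_sub_add_norm_sub q x k
      _ ≤ l + h := by
          rw [dist_eq_norm] at hxq hxk
          rw [norm_sub_rev k x] at hxk
          exact add_le_add hxq hxk
  -- ‖Xj - q‖ ≤ lj + l/β
  have h1 : ‖Xj - q‖ ≤ lj + l / β := by
    calc ‖Xj - q‖ ≤ ‖Xj - qj‖ + ‖qj - q‖ := by
          simpa using norm_sub_le_norm_sub_add_norm_sub Xj qj q
      _ ≤ lj + l / β := by rw [norm_sub_rev, hnear] at *; exact add_le_add hXj le_rfl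
  have h2 : h / β ≤ lj + l / β + s := by
    have : ‖Xj - k‖ ≤ ‖Xj - q‖ + ‖q - k‖ := by
      simpa using norm_sub_le_norm_sub_add_norm_sub Xj q k
    rw [← hs] at this
    linarith
  -- key: h * (1-β) ≤ l * (1+2β)
  have hkey : h * (1 - β) ≤ l * (1 + 2 * β) := by
    have hβ0' := hβ0
    have := h2
    have hsl' := hsl
    have hdiv : h / β ≤ l / β + 2 * l + h := by linarith
    have := (div_le_iff₀ hβ0).mp (by linarith [hdiv] : h / β ≤ (l / β + 2 * l + h))
    nlinarith [div_mul_cancel₀ l (ne_of_gt hβ0), div_mul_cancel₀ h (ne_of_gt hβ0)]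
  set c : ℝ := (1 - β) / (1 + 2 * β) with hc
  have hc0 : 0 < c := div_pos hβ1 hβ2
  have hch : c * h ≤ l := by
    rw [hc, div_mul_eq_mul_div, div_le_iff₀ hβ2]
    nlinarith
  -- √(l*h) ≥ h * √c
  have hsq : Real.sqrt c * h ≤ Real.sqrt (l * h) := by
    have : Real.sqrt c * h = Real.sqrt (c * h ^ 2) := by
      rw [Real.sqrt_mul hc0.le, Real.sqrt_sq hh.le]
    rw [this]
    apply Real.sqrt_le_sqrt
    nlinarith
  have hsqc0 : 0 < Real.sqrt c := Real.sqrt_pos.mpr hc0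
  have hsq0 : 0 < Real.sqrt (l * h) := Real.sqrt_pos.mpr (by positivity)
  have hmax : max s (max l h) ≤ 3 * h := by
    apply max_le (by linarith) (max_le (by linarith) (by linarith))
  have hrhs : 3 * Real.sqrt ((1 + 2 * β) / (1 - β)) = 3 / Real.sqrt c := by
    have hinv : (1 + 2 * β) / (1 - β) = c⁻¹ := by
      rw [hc]; field_simp
    rw [hinv, Real.sqrt_inv, div_eq_mul_inv]
  have hmain : max s (max l h) / Real.sqrt (l * h) ≤ 3 * Real.sqrt ((1 + 2 * β) / (1 - β)) := by
    rw [hrhs]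
    calc max s (max l h) / Real.sqrt (l * h) ≤ 3 * h / (Real.sqrt c * h) := by
          apply div_le_div₀ (by positivity) hmax (by positivity) hsq
      _ = 3 / Real.sqrt c := by field_simp
  have hlhs0 : 0 < max s (max l h) / Real.sqrt (l * h) := by
    apply div_pos _ hsq0
    exact lt_of_lt_of_le hh (le_max_of_le_right (le_max_right l h))
  exact Real.log_le_log hlhs0 hmain
end
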